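/- For all h, l ∈ H one has λ(h l₂)·l₁ = λ(h₂ l)·S(h₁) and λ(h l₁)·l₂ = λ(h₁ l)·S⁻¹(h₂)·a⁻¹. -/

import Mathlib

open TensorProduct Coalgebra HopfAlgebra

variable {k H : Type*} [Field k] [Ring H] [HopfAlgebra k H]

/-- The antipode of `H`, as a linear map. -/
local notation "𝐒" => HopfAlgebra.antipode (R := k)

/-- Convolution product on the dual of `H`: `(conv f g) h = f h₁ * g h₂`. -/
noncomputable def conv (f g : H →ₗ[k] k) : H →ₗ[k] k :=
  (LinearMap.mul' k k) ∘ₗ (TensorProduct.map f g) ∘ₗ (Coalgebra.comul (R := k))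

/-- `h ↦ f h₁ • h₂`. -/
noncomputable def lT (f : H →ₗ[k] k) : H →ₗ[k] H :=
  (TensorProduct.lid k H).toLinearMap ∘ₗ (f.rTensor H) ∘ₗ (Coalgebra.comul (R := k))

/-- The Sweedler sum `h ↦ f h₁ • p h₃ • g h₂`. -/
noncomputable def sw3 (f : H →ₗ[k] k) (g : H →ₗ[k] H) (p : H →ₗ[k] k) : H →ₗ[k] H :=
  (TensorProduct.lid k H).toLinearMap
    ∘ₗ (TensorProduct.rid k (k ⊗[k] H)).toLinearMap
    ∘ₗ (TensorProduct.map (TensorProduct.map f g) p)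
    ∘ₗ ((Coalgebra.comul (R := k)).rTensor H)
    ∘ₗ (Coalgebra.comul (R := k))

/-- `χ(h) = α(h₂) • S⁻²(h₁)`, the generalized Nakayama automorphism. -/
noncomputable def chiMap (Sinv : H →ₗ[k] H) (f : H →ₗ[k] k) : H →ₗ[k] H :=
  (TensorProduct.rid k H).toLinearMap
    ∘ₗ (TensorProduct.map (Sinv ∘ₗ Sinv) f)
    ∘ₗ (Coalgebra.comul (R := k))

/-- `f(R¹) • R²` for `R = R¹ ⊗ R² ∈ H ⊗ H`. -/
noncomputable def lap (f : H →ₗ[k] k) : (H ⊗[k] H) →ₗ[k] H :=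
  (TensorProduct.lid k H).toLinearMap ∘ₗ (f.rTensor H)

/-- `f(R²) • R¹` for `R = R¹ ⊗ R² ∈ H ⊗ H`. -/
noncomputable def rap (f : H →ₗ[k] k) : (H ⊗[k] H) →ₗ[k] H :=
  (TensorProduct.rid k H).toLinearMap ∘ₗ (LinearMap.lTensor H f)

/-- The Drinfeld element `u = S(R²)R¹`. -/
noncomputable def uElt (Rm : H ⊗[k] H) : H :=
  (LinearMap.mul' k H)
    ((TensorProduct.comm k H H)
      ((LinearMap.lTensor H (HopfAlgebra.antipode (R := k))) Rm))

/-- Convolution product on the dual of `H ⊗ H`. -/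
noncomputable def conv2 (f g : (H ⊗[k] H) →ₗ[k] k) : (H ⊗[k] H) →ₗ[k] k :=
  (LinearMap.mul' k k) ∘ₗ (TensorProduct.map f g) ∘ₗ (Coalgebra.comul (R := k) (A := H ⊗[k] H))

/-- `(h ⊗ l) ↦ σ(h₂ ⊗ l₂) • (l₁ * h₁)`. -/
noncomputable def ac1 (σ : (H ⊗[k] H) →ₗ[k] k) : (H ⊗[k] H) →ₗ[k] H :=
  (TensorProduct.rid k H).toLinearMap
    ∘ₗ (TensorProduct.map ((LinearMap.mul' k H) ∘ₗ (TensorProduct.comm k H H).toLinearMap) σ)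
    ∘ₗ (TensorProduct.tensorTensorTensorComm k H H H H).toLinearMap
    ∘ₗ (TensorProduct.map (Coalgebra.comul (R := k)) (Coalgebra.comul (R := k)))

/-- `(h ⊗ l) ↦ σ(h₁ ⊗ l₁) • (h₂ * l₂)`. -/
noncomputable def ac2 (σ : (H ⊗[k] H) →ₗ[k] k) : (H ⊗[k] H) →ₗ[k] H :=
  (TensorProduct.lid k H).toLinearMap
    ∘ₗ (TensorProduct.map σ (LinearMap.mul' k H))
    ∘ₗ (TensorProduct.tensorTensorTensorComm k H H H H).toLinearMap
    ∘ₗ (TensorProduct.map (Coalgebra.comul (R := k)) (Coalgebra.comul (R := k)))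

/-- `(h ⊗ l) ↦ ρ(h₁ ⊗ l₁) * lam(h₂ * l₂) * τ(h₃ ⊗ l₃)`. -/
noncomputable def trip (lam : H →ₗ[k] k) (ρ τ : (H ⊗[k] H) →ₗ[k] k) : (H ⊗[k] H) →ₗ[k] k :=
  (LinearMap.mul' k k)
    ∘ₗ ((LinearMap.mul' k k).rTensor k)
    ∘ₗ (TensorProduct.map (TensorProduct.map ρ (lam ∘ₗ (LinearMap.mul' k H))) τ)
    ∘ₗ ((TensorProduct.tensorTensorTensorComm k H H H H).toLinearMap.rTensor (H ⊗[k] H))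
    ∘ₗ (TensorProduct.tensorTensorTensorComm k (H ⊗[k] H) H (H ⊗[k] H) H).toLinearMap
    ∘ₗ (TensorProduct.map
          (((Coalgebra.comul (R := k)).rTensor H) ∘ₗ (Coalgebra.comul (R := k)))
          (((Coalgebra.comul (R := k)).rTensor H) ∘ₗ (Coalgebra.comul (R := k))))

/-- `u(h) = σ(h₂ ⊗ S h₁)`. -/
noncomputable def uF (σ : (H ⊗[k] H) →ₗ[k] k) : H →ₗ[k] k :=
  σ ∘ₗ (TensorProduct.comm k H H).toLinearMap
    ∘ₗ ((HopfAlgebra.antipode (R := k)).rTensor H) ∘ₗ (Coalgebra.comul (R := k))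

/-- `v(h) = σ(h₁ ⊗ S h₂)`. -/
noncomputable def vF (σ : (H ⊗[k] H) →ₗ[k] k) : H →ₗ[k] k :=
  σ ∘ₗ (LinearMap.lTensor H (HopfAlgebra.antipode (R := k))) ∘ₗ (Coalgebra.comul (R := k))

/-- `u⁻¹(h) = σ(S²(h₂) ⊗ h₁)`. -/
noncomputable def uinvF (σ : (H ⊗[k] H) →ₗ[k] k) : H →ₗ[k] k :=
  σ ∘ₗ (((HopfAlgebra.antipode (R := k)) ∘ₗ (HopfAlgebra.antipode (R := k))).rTensor H)
    ∘ₗ (TensorProduct.comm k H H).toLinearMap ∘ₗ (Coalgebra.comul (R := k))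

/-- `v⁻¹(h) = σ(S²(h₁) ⊗ h₂)`. -/
noncomputable def vinvF (σ : (H ⊗[k] H) →ₗ[k] k) : H →ₗ[k] k :=
  σ ∘ₗ (((HopfAlgebra.antipode (R := k)) ∘ₗ (HopfAlgebra.antipode (R := k))).rTensor H)
    ∘ₗ (Coalgebra.comul (R := k))

lemma sum_counit_smul_right {x : H} {ι : Type*} (r : Coalgebra.Repr k x ι) :
    ∑ i ∈ r.index, Coalgebra.counit (R := k) (r.left i) • r.right i = x := by
  have := congrArg (TensorProduct.lid k H) (Coalgebra.sum_counit_tmul_eq r)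
  simpa only [map_sum, TensorProduct.lid_tmul] using this.trans (one_smul k _)

lemma sum_counit_smul_left {x : H} {ι : Type*} (r : Coalgebra.Repr k x ι) :
    ∑ i ∈ r.index, Coalgebra.counit (R := k) (r.right i) • r.left i = x := by
  have := congrArg (TensorProduct.rid k H) (Coalgebra.sum_tmul_counit_eq r)
  simpa only [map_sum, TensorProduct.rid_tmul] using this.trans (one_smul k _)

/-- Trilinear helper map `u ⊗ (v ⊗ w) ↦ α u * (β v * γ w)`. -/
noncomputable def tri (α β γ : H →ₗ[k] H) : H ⊗[k] (H ⊗[k] H) →ₗ[k] H :=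
  (LinearMap.mul' k H) ∘ₗ
    TensorProduct.map α ((LinearMap.mul' k H) ∘ₗ TensorProduct.map β γ)

@[simp] lemma tri_tmul (α β γ : H →ₗ[k] H) (u v w : H) :
    tri α β γ (u ⊗ₜ (v ⊗ₜ w)) = α u * (β v * γ w) := rfl

@[simp] lemma antipode_one : 𝐒 (1 : H) = 1 := by
  have := HopfAlgebra.mul_antipode_rTensor_comul_apply (R := k) (1 : H)
  simpa [Algebra.TensorProduct.one_def] using this

lemma sum_rotate {M : Type*} [AddCommMonoid M] {ι γ : Type*} {κ : ι → Type*}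
    (s : Finset ι) (t : ∀ i, Finset (κ i)) (u : Finset γ)
    (f : ∀ i, κ i → γ → M) :
    ∑ i ∈ s, ∑ j ∈ t i, ∑ q ∈ u, f i j q = ∑ q ∈ u, ∑ i ∈ s, ∑ j ∈ t i, f i j q :=
  (Finset.sum_congr rfl fun i _ => Finset.sum_comm).trans Finset.sum_comm

lemma sandwich {ι : Type*} (s : Finset ι) (f g : ι → H) (c : k)
    (hfg : ∑ j ∈ s, f j * g j = c • (1 : H)) (u w : H) :
    ∑ j ∈ s, u * (f j * (g j * w)) = c • (u * w) := by
  have : ∀ j ∈ s, u * (f j * (g j * w)) = u * ((f j * g j) * w) := by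
    intro j _; simp only [mul_assoc]
  rw [Finset.sum_congr rfl this, ← Finset.mul_sum, ← Finset.sum_mul, hfg,
    smul_mul_assoc, one_mul, mul_smul_comm]

lemma sandwich0 {ι : Type*} (s : Finset ι) (f g : ι → H) (c : k)
    (hfg : ∑ j ∈ s, f j * g j = c • (1 : H)) (w : H) :
    ∑ j ∈ s, f j * (g j * w) = c • w := by
  have := sandwich s f g c hfg 1 w
  simpa only [one_mul] using this

lemma antipode_mul_anti (x y : H) : 𝐒 (x * y) = 𝐒 y * 𝐒 x := by
  classical
  let rx := ℛ k x
  let ry := ℛ k y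
  let rx1 : (i : H × H) → Coalgebra.Repr k (rx.left i) (H × H) := fun i => ℛ k (rx.left i)
  let rx2 : (i : H × H) → Coalgebra.Repr k (rx.right i) (H × H) := fun i => ℛ k (rx.right i)
  let ry1 : (p : H × H) → Coalgebra.Repr k (ry.left p) (H × H) := fun p => ℛ k (ry.left p)
  let ry2 : (p : H × H) → Coalgebra.Repr k (ry.right p) (H × H) := fun p => ℛ k (ry.right p)
  -- Step A : expand 𝐒 y * 𝐒 x
  have stepA : 𝐒 y * 𝐒 x =
      ∑ p ∈ ry.index, ∑ q ∈ (ry2 p).index, ∑ i ∈ rx.index, ∑ j ∈ (rx2 i).index,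
        𝐒 (ry.left p) * (𝐒 (rx.left i) * ((rx2 i).left j * ((ry2 p).left q *
          𝐒 ((rx2 i).right j * (ry2 p).right q)))) := by
    conv_lhs => rw [← sum_counit_smul_left ry, ← sum_counit_smul_left rx]
    rw [map_sum, map_sum]
    simp only [map_smul]
    rw [Finset.sum_mul_sum]
    refine Finset.sum_congr rfl fun p _ => ?_
    rw [← sum_rotate]
    refine Finset.sum_congr rfl fun i _ => ?_
    have key0 := sum_mul_antipode_eq_smul ((rx2 i).mul (ry2 p))
    have key : ∑ j ∈ (rx2 i).index, ∑ q ∈ (ry2 p).index,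
        ((rx2 i).left j * (ry2 p).left q) * 𝐒 ((rx2 i).right j * (ry2 p).right q)
        = counit (R := k) (rx.right i * ry.right p) • (1:H) := by
      exact (Finset.sum_product _ _ _).symm.trans key0
    calc (counit (R := k) (ry.right p) • 𝐒 (ry.left p)) *
          (counit (R := k) (rx.right i) • 𝐒 (rx.left i))
        = (counit (R := k) (rx.right i * ry.right p)) •
            (𝐒 (ry.left p) * 𝐒 (rx.left i)) := by
          rw [Bialgebra.counit_mul]
          rw [smul_mul_assoc, mul_smul_comm, smul_smul, mul_comm]
      _ = (𝐒 (ry.left p) * 𝐒 (rx.left i)) *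
            ((counit (R := k) (rx.right i * ry.right p)) • (1:H)) := by
          rw [mul_smul_comm, mul_one]
      _ = _ := by
          rw [← key, Finset.mul_sum]
          refine Finset.sum_congr rfl fun j _ => ?_
          rw [Finset.mul_sum]
          refine Finset.sum_congr rfl fun q _ => ?_
          show (𝐒 (ry.left p) * 𝐒 (rx.left i)) *
            (((rx2 i).left j * (ry2 p).left q) * 𝐒 ((rx2 i).right j * (ry2 p).right q)) = _
          simp only [mul_assoc]
  rw [stepA]
  -- Step B : for each p q, use coassociativity of x to swap which leg is split
  have stepB : ∀ p ∈ ry.index, ∀ q ∈ (ry2 p).index,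
      (∑ i ∈ rx.index, ∑ j ∈ (rx2 i).index,
        𝐒 (ry.left p) * (𝐒 (rx.left i) * ((rx2 i).left j * ((ry2 p).left q *
          𝐒 ((rx2 i).right j * (ry2 p).right q))))) =
      ∑ i ∈ rx.index, ∑ j ∈ (rx1 i).index,
        𝐒 (ry.left p) * (𝐒 ((rx1 i).left j) * ((rx1 i).right j * ((ry2 p).left q *
          𝐒 (rx.right i * (ry2 p).right q)))) := by
    intro p _ q _
    have key := congrArg (tri ((LinearMap.mulLeft k (𝐒 (ry.left p))) ∘ₗ 𝐒)
      (LinearMap.mulRight k ((ry2 p).left q))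
      (𝐒 ∘ₗ LinearMap.mulRight k ((ry2 p).right q)))
      (Coalgebra.sum_tmul_tmul_eq rx rx1 rx2)
    simp only [map_sum, tri_tmul, LinearMap.comp_apply, LinearMap.mulLeft_apply,
      LinearMap.mulRight_apply, mul_assoc] at key
    exact key.symm
  rw [Finset.sum_congr rfl fun p hp => Finset.sum_congr rfl fun q hq => stepB p hp q hq]
  -- Step C : collapse the x-splitting
  have stepC : ∀ p ∈ ry.index, ∀ q ∈ (ry2 p).index,
      (∑ i ∈ rx.index, ∑ j ∈ (rx1 i).index,
        𝐒 (ry.left p) * (𝐒 ((rx1 i).left j) * ((rx1 i).right j * ((ry2 p).left q *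
          𝐒 (rx.right i * (ry2 p).right q))))) =
      𝐒 (ry.left p) * ((ry2 p).left q * 𝐒 (x * (ry2 p).right q)) := by
    intro p _ q _
    have inner : ∀ i ∈ rx.index,
        (∑ j ∈ (rx1 i).index,
          𝐒 (ry.left p) * (𝐒 ((rx1 i).left j) * ((rx1 i).right j * ((ry2 p).left q *
            𝐒 (rx.right i * (ry2 p).right q))))) =
        counit (R := k) (rx.left i) •
          (𝐒 (ry.left p) * ((ry2 p).left q * 𝐒 (rx.right i * (ry2 p).right q))) := by
      intro i _
      have hs := sandwich ((rx1 i).index) (fun j => 𝐒 ((rx1 i).left j))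
        (fun j => (rx1 i).right j) (counit (R := k) (rx.left i))
        (sum_antipode_mul_eq_smul (rx1 i)) (𝐒 (ry.left p))
        ((ry2 p).left q * 𝐒 (rx.right i * (ry2 p).right q))
      simpa only [mul_assoc] using hs
    rw [Finset.sum_congr rfl inner]
    conv_rhs => rw [← sum_counit_smul_right rx]
    rw [Finset.sum_mul]
    simp only [smul_mul_assoc, map_sum, map_smul, Finset.mul_sum, mul_smul_comm,
      Finset.smul_sum]
  rw [Finset.sum_congr rfl fun p hp => Finset.sum_congr rfl fun q hq => stepC p hp q hq]
  -- Step D : use coassociativity of y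
  have key := congrArg (tri (𝐒 : H →ₗ[k] H) (LinearMap.id)
      (𝐒 ∘ₗ LinearMap.mulLeft k x)) (Coalgebra.sum_tmul_tmul_eq ry ry1 ry2)
  simp only [map_sum, tri_tmul, LinearMap.comp_apply, LinearMap.mulLeft_apply,
    LinearMap.id_apply, mul_assoc] at key
  rw [← key]
  -- Step E : collapse the y-splitting
  have stepE : ∀ p ∈ ry.index,
      (∑ q ∈ (ry1 p).index, 𝐒 ((ry1 p).left q) * ((ry1 p).right q *
        𝐒 (x * ry.right p))) =
      counit (R := k) (ry.left p) • 𝐒 (x * ry.right p) := fun p _ =>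
    sandwich0 ((ry1 p).index) (fun q => 𝐒 ((ry1 p).left q)) (fun q => (ry1 p).right q)
      (counit (R := k) (ry.left p)) (sum_antipode_mul_eq_smul (ry1 p)) _
  rw [Finset.sum_congr rfl stepE]
  have last : ∑ p ∈ ry.index, counit (R := k) (ry.left p) • 𝐒 (x * ry.right p) =
      𝐒 (x * ∑ p ∈ ry.index, counit (R := k) (ry.left p) • ry.right p) := by
    rw [Finset.mul_sum, map_sum]
    exact Finset.sum_congr rfl fun p _ => by rw [mul_smul_comm, map_smul]
  rw [last, sum_counit_smul_right ry]

lemma sum_sinv_mul (Sinv : H →ₗ[k] H) (hSinv_l : ∀ h : H, Sinv (𝐒 h) = h)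
    (hSinv_r : ∀ h : H, 𝐒 (Sinv h) = h) {x : H} {ι : Type*} (r : Coalgebra.Repr k x ι) :
    ∑ i ∈ r.index, Sinv (r.right i) * r.left i = Coalgebra.counit (R := k) x • (1 : H) := by
  have inj : Function.Injective fun z : H => 𝐒 z := fun s t hst => by
    simpa only [hSinv_l] using congrArg Sinv hst
  apply inj
  show 𝐒 _ = 𝐒 _
  rw [map_sum, map_smul, _root_.antipode_one]
  calc ∑ i ∈ r.index, 𝐒 (Sinv (r.right i) * r.left i)
      = ∑ i ∈ r.index, 𝐒 (r.left i) * r.right i := by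
        refine Finset.sum_congr rfl fun i _ => ?_
        rw [antipode_mul_anti, hSinv_r]
    _ = Coalgebra.counit (R := k) x • (1 : H) := sum_antipode_mul_eq_smul r

lemma lamA (lam : H →ₗ[k] k) (hlam_int : ∀ f : H →ₗ[k] k, conv f lam = f 1 • lam)
    {x : H} {ι : Type*} (r : Coalgebra.Repr k x ι) :
    ∑ i ∈ r.index, lam (r.right i) • r.left i = lam x • (1 : H) := by
  rw [← sub_eq_zero]
  apply (Module.forall_dual_apply_eq_zero_iff k _).mp
  intro f
  have hf := LinearMap.congr_fun (hlam_int f) x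
  have hcx : Coalgebra.comul (R := k) x = ∑ i ∈ r.index, r.left i ⊗ₜ[k] r.right i := r.eq.symm
  rw [conv, LinearMap.comp_apply, LinearMap.comp_apply, hcx] at hf
  simp only [map_sum, TensorProduct.map_tmul, LinearMap.mul'_apply, LinearMap.smul_apply,
    smul_eq_mul] at hf
  simp only [map_sub, map_sum, map_smul, smul_eq_mul]
  rw [sub_eq_zero]
  calc ∑ i ∈ r.index, lam (r.right i) * f (r.left i)
      = ∑ i ∈ r.index, f (r.left i) * lam (r.right i) := by
        exact Finset.sum_congr rfl fun i _ => mul_comm _ _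
    _ = f 1 * lam x := hf
    _ = lam x * f 1 := mul_comm _ _

lemma lamB (lam : H →ₗ[k] k) (a : H) (ha_mod : ∀ h : H, lT lam h = lam h • (𝐒 a))
    {x : H} {ι : Type*} (r : Coalgebra.Repr k x ι) :
    ∑ i ∈ r.index, lam (r.left i) • r.right i = lam x • (𝐒 a) := by
  have hf := ha_mod x
  have hcx : Coalgebra.comul (R := k) x = ∑ i ∈ r.index, r.left i ⊗ₜ[k] r.right i := r.eq.symm
  rw [lT, LinearMap.comp_apply, LinearMap.comp_apply, hcx] at hf
  simpa only [map_sum, LinearMap.rTensor_tmul, LinearEquiv.coe_coe,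
    TensorProduct.lid_tmul] using hf

/-- Trilinear helper map `u ⊗ (v ⊗ w) ↦ α u * (γ w * β v)`. -/
noncomputable def tri2 (α β γ : H →ₗ[k] H) : H ⊗[k] (H ⊗[k] H) →ₗ[k] H :=
  (LinearMap.mul' k H) ∘ₗ
    TensorProduct.map α ((LinearMap.mul' k H) ∘ₗ TensorProduct.map γ β ∘ₗ
      (TensorProduct.comm k H H).toLinearMap)

@[simp] lemma tri2_tmul (α β γ : H →ₗ[k] H) (u v w : H) :
    tri2 α β γ (u ⊗ₜ (v ⊗ₜ w)) = α u * (γ w * β v) := rfl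


/-- For all $h, l ∈ H$:
$λ(h l_2) l_1 = λ(h_2 l) S(h_1)$ and $λ(h l_1) l_2 = λ(h_1 l) S^{-1}(h_2) a^{-1}$. -/
theorem integral_exchange_formulas
    (lam : H →ₗ[k] k) (hlam_ne : lam ≠ 0)
    (hlam_int : ∀ f : H →ₗ[k] k, conv f lam = f 1 • lam)
    (a : H) (ha_ne : a ≠ 0) (ha_grp : Coalgebra.comul (R := k) a = a ⊗ₜ[k] a)
    (ha_mod : ∀ h : H, lT lam h = lam h • (𝐒 a))
    (ha_S2 : ∀ h : H, lam (𝐒 (𝐒 h)) = lam (a * h * 𝐒 a))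
    (Sinv : H →ₗ[k] H) (hSinv_l : ∀ h : H, Sinv (𝐒 h) = h)
    (hSinv_r : ∀ h : H, 𝐒 (Sinv h) = h) :
    ∀ h l : H,
      ((TensorProduct.rid k H)
          ((LinearMap.lTensor H (lam ∘ₗ LinearMap.mulLeft k h)) (Coalgebra.comul (R := k) l)) =
        (TensorProduct.rid k H)
          ((TensorProduct.map (𝐒 : H →ₗ[k] H) (lam ∘ₗ LinearMap.mulRight k l))
            (Coalgebra.comul (R := k) h))) ∧
      ((TensorProduct.lid k H)
          ((LinearMap.rTensor H (lam ∘ₗ LinearMap.mulLeft k h)) (Coalgebra.comul (R := k) l)) =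
        ((TensorProduct.lid k H)
          ((TensorProduct.map (lam ∘ₗ LinearMap.mulRight k l) Sinv)
            (Coalgebra.comul (R := k) h))) * (𝐒 a)) := by
  intro h l
  classical
  let rh := ℛ k h
  let rl := ℛ k l
  let rh1 : (i : H × H) → Coalgebra.Repr k (rh.left i) (H × H) := fun i => ℛ k (rh.left i)
  let rh2 : (i : H × H) → Coalgebra.Repr k (rh.right i) (H × H) := fun i => ℛ k (rh.right i)
  have hch : Coalgebra.comul (R := k) h = ∑ i ∈ rh.index, rh.left i ⊗ₜ[k] rh.right i := rh.eq.symm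
  have hcl : Coalgebra.comul (R := k) l = ∑ p ∈ rl.index, rl.left p ⊗ₜ[k] rl.right p := rl.eq.symm
  constructor
  · -- Part (i)
    rw [hch, hcl]
    simp only [map_sum, LinearMap.lTensor_tmul, TensorProduct.map_tmul,
      LinearMap.comp_apply, LinearMap.mulLeft_apply, LinearMap.mulRight_apply,
      TensorProduct.rid_tmul]
    symm
    calc ∑ i ∈ rh.index, lam (rh.right i * l) • 𝐒 (rh.left i)
        = ∑ i ∈ rh.index, ∑ j ∈ (rh2 i).index, ∑ p ∈ rl.index,
            lam ((rh2 i).right j * rl.right p) •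
              (𝐒 (rh.left i) * ((rh2 i).left j * rl.left p)) := by
          refine Finset.sum_congr rfl fun i _ => ?_
          have key0 := lamA lam hlam_int ((rh2 i).mul rl)
          have key : ∑ j ∈ (rh2 i).index, ∑ p ∈ rl.index,
              lam ((rh2 i).right j * rl.right p) • ((rh2 i).left j * rl.left p)
              = lam (rh.right i * l) • (1 : H) :=
            (Finset.sum_product _ _ _).symm.trans key0
          have h1 : lam (rh.right i * l) • 𝐒 (rh.left i)
              = 𝐒 (rh.left i) * (lam (rh.right i * l) • (1 : H)) := by
            rw [mul_smul_comm, mul_one]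
          rw [h1, ← key, Finset.mul_sum]
          refine Finset.sum_congr rfl fun j _ => ?_
          rw [Finset.mul_sum]
          exact Finset.sum_congr rfl fun p _ => by rw [mul_smul_comm]
      _ = ∑ p ∈ rl.index, ∑ i ∈ rh.index, ∑ j ∈ (rh2 i).index,
            lam ((rh2 i).right j * rl.right p) •
              (𝐒 (rh.left i) * ((rh2 i).left j * rl.left p)) :=
          sum_rotate _ _ _ _
      _ = ∑ p ∈ rl.index, ∑ i ∈ rh.index, ∑ j ∈ (rh1 i).index,
            lam (rh.right i * rl.right p) •
              (𝐒 ((rh1 i).left j) * ((rh1 i).right j * rl.left p)) := by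
          refine Finset.sum_congr rfl fun p _ => ?_
          have key := congrArg (tri (𝐒 : H →ₗ[k] H) (LinearMap.mulRight k (rl.left p))
            ((Algebra.linearMap k H) ∘ₗ lam ∘ₗ LinearMap.mulRight k (rl.right p)))
            (Coalgebra.sum_tmul_tmul_eq rh rh1 rh2)
          simp only [map_sum, tri_tmul, LinearMap.comp_apply, LinearMap.mulRight_apply,
            Algebra.linearMap_apply, Algebra.algebraMap_eq_smul_one, mul_assoc,
            mul_smul_comm, mul_one] at key
          exact key.symm
      _ = ∑ p ∈ rl.index, lam (h * rl.right p) • rl.left p := by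
          refine Finset.sum_congr rfl fun p _ => ?_
          have inner : ∀ i ∈ rh.index,
              (∑ j ∈ (rh1 i).index, lam (rh.right i * rl.right p) •
                (𝐒 ((rh1 i).left j) * ((rh1 i).right j * rl.left p)))
              = lam ((Coalgebra.counit (R := k) (rh.left i) • rh.right i) * rl.right p) •
                  rl.left p := by
            intro i _
            rw [← Finset.smul_sum, sandwich0 ((rh1 i).index) _ _ _
              (sum_antipode_mul_eq_smul (rh1 i)), smul_smul, smul_mul_assoc, map_smul,
              smul_eq_mul, mul_comm]
          rw [Finset.sum_congr rfl inner]
          rw [show ∑ i ∈ rh.index,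
              lam ((Coalgebra.counit (R := k) (rh.left i) • rh.right i) * rl.right p) • rl.left p
              = lam ((∑ i ∈ rh.index, Coalgebra.counit (R := k) (rh.left i) • rh.right i)
                  * rl.right p) • rl.left p by
            rw [Finset.sum_mul, map_sum, Finset.sum_smul]]
          rw [sum_counit_smul_right rh]
  · -- Part (ii)
    rw [hch, hcl]
    simp only [map_sum, LinearMap.rTensor_tmul, TensorProduct.map_tmul,
      LinearMap.comp_apply, LinearMap.mulLeft_apply, LinearMap.mulRight_apply,
      TensorProduct.lid_tmul]
    rw [Finset.sum_mul]
    symm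
    calc ∑ i ∈ rh.index, (lam (rh.left i * l) • Sinv (rh.right i)) * 𝐒 a
        = ∑ i ∈ rh.index, ∑ j ∈ (rh1 i).index, ∑ p ∈ rl.index,
            lam ((rh1 i).left j * rl.left p) •
              (Sinv (rh.right i) * ((rh1 i).right j * rl.right p)) := by
          refine Finset.sum_congr rfl fun i _ => ?_
          have key0 := lamB lam a ha_mod ((rh1 i).mul rl)
          have key : ∑ j ∈ (rh1 i).index, ∑ p ∈ rl.index,
              lam ((rh1 i).left j * rl.left p) • ((rh1 i).right j * rl.right p)
              = lam (rh.left i * l) • (𝐒 a) :=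
            (Finset.sum_product _ _ _).symm.trans key0
          have h1 : (lam (rh.left i * l) • Sinv (rh.right i)) * 𝐒 a
              = Sinv (rh.right i) * (lam (rh.left i * l) • (𝐒 a)) := by
            rw [smul_mul_assoc, mul_smul_comm]
          rw [h1, ← key, Finset.mul_sum]
          refine Finset.sum_congr rfl fun j _ => ?_
          rw [Finset.mul_sum]
          exact Finset.sum_congr rfl fun p _ => by rw [mul_smul_comm]
      _ = ∑ p ∈ rl.index, ∑ i ∈ rh.index, ∑ j ∈ (rh1 i).index,
            lam ((rh1 i).left j * rl.left p) •
              (Sinv (rh.right i) * ((rh1 i).right j * rl.right p)) :=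
          sum_rotate _ _ _ _
      _ = ∑ p ∈ rl.index, ∑ i ∈ rh.index, ∑ j ∈ (rh2 i).index,
            lam (rh.left i * rl.left p) •
              (Sinv ((rh2 i).right j) * ((rh2 i).left j * rl.right p)) := by
          refine Finset.sum_congr rfl fun p _ => ?_
          have key := congrArg (tri2 ((Algebra.linearMap k H) ∘ₗ lam ∘ₗ
              LinearMap.mulRight k (rl.left p)) (LinearMap.mulRight k (rl.right p)) Sinv)
            (Coalgebra.sum_tmul_tmul_eq rh rh1 rh2)
          simp only [map_sum, tri2_tmul, LinearMap.comp_apply, LinearMap.mulRight_apply,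
            Algebra.linearMap_apply, Algebra.algebraMap_eq_smul_one, smul_mul_assoc,
            one_mul] at key
          exact key
      _ = ∑ p ∈ rl.index, lam (h * rl.left p) • rl.right p := by
          refine Finset.sum_congr rfl fun p _ => ?_
          have inner : ∀ i ∈ rh.index,
              (∑ j ∈ (rh2 i).index, lam (rh.left i * rl.left p) •
                (Sinv ((rh2 i).right j) * ((rh2 i).left j * rl.right p)))
              = lam ((Coalgebra.counit (R := k) (rh.right i) • rh.left i) * rl.left p) •
                  rl.right p := by
            intro i _
            rw [← Finset.smul_sum, sandwich0 ((rh2 i).index) _ _ _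
              (sum_sinv_mul Sinv hSinv_l hSinv_r (rh2 i)), smul_smul, smul_mul_assoc, map_smul,
              smul_eq_mul, mul_comm]
          rw [Finset.sum_congr rfl inner]
          rw [show ∑ i ∈ rh.index,
              lam ((Coalgebra.counit (R := k) (rh.right i) • rh.left i) * rl.left p) • rl.right p
              = lam ((∑ i ∈ rh.index, Coalgebra.counit (R := k) (rh.right i) • rh.left i)
                  * rl.left p) • rl.right p by
            rw [Finset.sum_mul, map_sum, Finset.sum_smul]]
          rw [sum_counit_smul_left rh]
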